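/- For all integers n ≥ 0 and k ≥ 1, every sequence of real numbers ᾱ = (α₀, α₁, …, α_{n−1}), all nonzero real numbers ℓ₁, …, ℓ_k, and every real number z, the multiparameter poly-Bernoulli polynomials are expressed through the multiparameter poly-Cauchy polynomials of the second kind by B_{n,ᾱ,L}^{(k)}(z) = Σ_{j=0}^{n} Σ_{m=j}^{n} (−1)^n m! S_ᾱ(n,m) S_ᾱ(m,j) Ĉ_{j,L}^{(k)}(z;ᾱ). -/

import Mathlib

open Finset

/-- Iterated integral ∫₀^{ℓ₁}⋯∫₀^{ℓ_k} f(x₁x₂⋯x_k) dx₁⋯dx_k over the list of bounds. -/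
noncomputable def iterInt : List ℝ → (ℝ → ℝ) → ℝ
  | [], f => f 1
  | l :: ls, f => ∫ x in (0:ℝ)..l, iterInt ls (fun y => f (x * y))

lemma iterInt_monomials : ∀ (ls : List ℝ) (d : ℕ) (c : ℕ → ℝ),
    iterInt ls (fun t => ∑ i ∈ range d, c i * t ^ i)
      = ∑ i ∈ range d, c i * ls.prod ^ (i + 1) / ((i : ℝ) + 1) ^ ls.length := by
  intro ls
  induction ls with
  | nil => intro d c; simp [iterInt]
  | cons l ls ih =>
    intro d c
    show (∫ x in (0:ℝ)..l, iterInt ls fun y => ∑ i ∈ range d, c i * (x * y) ^ i) = _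
    have h1 : ∀ x : ℝ,
        (iterInt ls fun y => ∑ i ∈ range d, c i * (x * y) ^ i)
          = ∑ i ∈ range d, c i * x ^ i * ls.prod ^ (i + 1) / ((i : ℝ) + 1) ^ ls.length := by
      intro x
      have h2 : (fun y => ∑ i ∈ range d, c i * (x * y) ^ i)
          = fun y => ∑ i ∈ range d, (c i * x ^ i) * y ^ i := by
        funext y
        refine Finset.sum_congr rfl fun i _ => ?_
        rw [mul_pow]; ring
      rw [h2, ih d fun i => c i * x ^ i]
    simp only [h1]
    rw [intervalIntegral.integral_finset_sum]
    · refine Finset.sum_congr rfl fun i _ => ?_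
      have h3 : (fun x : ℝ => c i * x ^ i * ls.prod ^ (i + 1) / ((i : ℝ) + 1) ^ ls.length)
          = fun x : ℝ => x ^ i * (c i * ls.prod ^ (i + 1) / ((i : ℝ) + 1) ^ ls.length) := by
        funext x; ring
      rw [h3, intervalIntegral.integral_mul_const, integral_pow]
      have hi : ((i : ℝ) + 1) ≠ 0 := by positivity
      rw [List.prod_cons, List.length_cons]
      field_simp
      ring
    · intro i _
      exact Continuous.intervalIntegrable (((continuous_const.mul (continuous_pow i)).mul continuous_const).div_const _) 0 l

lemma iterInt_poly (ls : List ℝ) (Q : Polynomial ℝ) (d : ℕ) (hd : Q.natDegree < d) :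
    iterInt ls (fun t => Q.eval t)
      = ∑ i ∈ range d, Q.coeff i * ls.prod ^ (i + 1) / ((i : ℝ) + 1) ^ ls.length := by
  have h : (fun t : ℝ => Q.eval t) = fun t => ∑ i ∈ range d, Q.coeff i * t ^ i := by
    funext t
    exact Polynomial.eval_eq_sum_range' hd t
  rw [h, iterInt_monomials]

lemma swap_sum (n : ℕ) (f : ℕ → ℕ → ℝ) :
    ∑ j ∈ range (n + 1), ∑ m ∈ Icc j n, f j m
      = ∑ m ∈ range (n + 1), ∑ j ∈ range (m + 1), f j m := by
  rw [Finset.sum_sigma', Finset.sum_sigma']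
  apply Finset.sum_nbij' (fun p => ⟨p.2, p.1⟩) (fun p => ⟨p.2, p.1⟩) <;>
    simp only [Finset.mem_sigma, Finset.mem_range, Finset.mem_Icc, Nat.lt_succ_iff] <;>
    intro a ha <;> first | omega | trivial

theorem stmt17 (n k : ℕ) (hk : 1 ≤ k) (α : ℕ → ℝ) (L : Fin k → ℝ)
    (hL : ∀ i, L i ≠ 0) (z : ℝ) (S : ℕ → ℕ → ℝ)
    (hS : ∀ p ≤ n, ∀ x : ℝ,
      x ^ p = ∑ m ∈ range (p + 1), S p m * ∏ i ∈ range m, (x - α i)) :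
    (-1 : ℝ) ^ n * ∑ i ∈ range (n + 1), ∑ m ∈ Icc i n,
        (-1 : ℝ) ^ m * (m.factorial : ℝ) * (m.choose i : ℝ) * S n m *
          (∏ j, L j) ^ (m - i + 1) / (((m - i : ℕ) : ℝ) + 1) ^ k * (-z) ^ i =
      ∑ j ∈ range (n + 1), ∑ m ∈ Icc j n,
        (-1 : ℝ) ^ n * (m.factorial : ℝ) * S n m * S m j *
          iterInt (List.ofFn L) (fun t => ∏ i ∈ range j, (-t - α i + z)) := by
  set ls := List.ofFn L with hls
  have hlen : ls.length = k := List.length_ofFn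
  have hprod : ls.prod = ∏ j, L j := List.prod_ofFn
  rw [Finset.mul_sum]
  simp only [Finset.mul_sum]
  rw [swap_sum, swap_sum]
  refine Finset.sum_congr rfl fun m hm => ?_
  rw [Finset.mem_range, Nat.lt_succ_iff] at hm
  set P : ℕ → Polynomial ℝ := fun j => ∏ i ∈ range j, (Polynomial.C (z - α i) - Polynomial.X)
    with hP
  have hPdeg : ∀ j, (P j).natDegree ≤ j := by
    intro j
    refine le_trans (Polynomial.natDegree_prod_le _ _) ?_
    calc ∑ i ∈ range j, (Polynomial.C (z - α i) - Polynomial.X).natDegree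
        ≤ ∑ _i ∈ range j, 1 := by
          refine Finset.sum_le_sum fun i _ => ?_
          refine le_trans (Polynomial.natDegree_sub_le _ _) ?_
          simp
      _ = j := by simp
  have hfP : ∀ j, (fun t : ℝ => ∏ i ∈ range j, (-t - α i + z)) = fun t => (P j).eval t := by
    intro j
    funext t
    simp only [hP, Polynomial.eval_prod]
    refine Finset.prod_congr rfl fun i _ => ?_
    simp only [Polynomial.eval_sub, Polynomial.eval_C, Polynomial.eval_X]
    ring
  set Q : Polynomial ℝ := (Polynomial.C z - Polynomial.X) ^ m with hQdef
  have hQdeg : Q.natDegree ≤ m := by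
    refine le_trans Polynomial.natDegree_pow_le ?_
    have h1 : (Polynomial.C z - Polynomial.X : Polynomial ℝ).natDegree ≤ 1 := by
      refine le_trans (Polynomial.natDegree_sub_le _ _) ?_
      simp
    calc m * (Polynomial.C z - Polynomial.X : Polynomial ℝ).natDegree ≤ m * 1 :=
          Nat.mul_le_mul_left m h1
      _ = m := by omega
  have hQ : Q = ∑ j ∈ range (m + 1), Polynomial.C (S m j) * P j := by
    apply Polynomial.funext
    intro x
    rw [Polynomial.eval_finset_sum]
    simp only [hQdef, hP, Polynomial.eval_pow, Polynomial.eval_sub, Polynomial.eval_C,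
      Polynomial.eval_X, Polynomial.eval_mul, Polynomial.eval_prod]
    rw [hS m hm (z - x)]
    refine Finset.sum_congr rfl fun j _ => ?_
    congr 1
    refine Finset.prod_congr rfl fun i _ => ?_
    ring
  have hQc : ∀ r, Q.coeff r = ∑ j ∈ range (m + 1), S m j * (P j).coeff r := by
    intro r
    rw [hQ, Polynomial.finset_sum_coeff]
    refine Finset.sum_congr rfl fun j _ => ?_
    rw [Polynomial.coeff_C_mul]
  -- RHS transformation
  have hRj : ∀ j ∈ range (m + 1),
      iterInt ls (fun t : ℝ => ∏ i ∈ range j, (-t - α i + z))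
        = ∑ r ∈ range (m + 1), (P j).coeff r * ls.prod ^ (r + 1) / ((r : ℝ) + 1) ^ k := by
    intro j hj
    rw [Finset.mem_range, Nat.lt_succ_iff] at hj
    have hd : (P j).natDegree < m + 1 := lt_of_le_of_lt (le_trans (hPdeg j) hj) (Nat.lt_succ_self m)
    rw [hfP j, iterInt_poly ls (P j) (m + 1) hd, hlen]
  have hRHS : (∑ j ∈ range (m + 1), (-1 : ℝ) ^ n * (m.factorial : ℝ) * S n m * S m j *
        iterInt ls (fun t : ℝ => ∏ i ∈ range j, (-t - α i + z)))
      = ∑ r ∈ range (m + 1), (-1 : ℝ) ^ n * (m.factorial : ℝ) * S n m *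
          (Q.coeff r * ls.prod ^ (r + 1) / ((r : ℝ) + 1) ^ k) := by
    calc (∑ j ∈ range (m + 1), (-1 : ℝ) ^ n * (m.factorial : ℝ) * S n m * S m j *
          iterInt ls (fun t : ℝ => ∏ i ∈ range j, (-t - α i + z)))
        = ∑ j ∈ range (m + 1), ∑ r ∈ range (m + 1),
            (-1 : ℝ) ^ n * (m.factorial : ℝ) * S n m *
              (S m j * (P j).coeff r * ls.prod ^ (r + 1) / ((r : ℝ) + 1) ^ k) := by
          refine Finset.sum_congr rfl fun j hj => ?_
          rw [hRj j hj, Finset.mul_sum]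
          refine Finset.sum_congr rfl fun r _ => ?_
          ring
      _ = ∑ r ∈ range (m + 1), ∑ j ∈ range (m + 1),
            (-1 : ℝ) ^ n * (m.factorial : ℝ) * S n m *
              (S m j * (P j).coeff r * ls.prod ^ (r + 1) / ((r : ℝ) + 1) ^ k) :=
          Finset.sum_comm
      _ = _ := by
          refine Finset.sum_congr rfl fun r _ => ?_
          rw [hQc r, Finset.sum_mul, Finset.sum_div, Finset.mul_sum]
  rw [hRHS]
  -- LHS transformation: binomial expansion of Q
  have hbin : (fun t : ℝ => Q.eval t)
      = fun t : ℝ => ∑ i ∈ range (m + 1),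
          ((-1 : ℝ) ^ i * z ^ (m - i) * (m.choose i : ℝ)) * t ^ i := by
    funext t
    simp only [hQdef, Polynomial.eval_pow, Polynomial.eval_sub, Polynomial.eval_C,
      Polynomial.eval_X]
    rw [show z - t = -t + z from by ring, add_pow]
    refine Finset.sum_congr rfl fun i _ => ?_
    rw [neg_pow]
    ring
  have hQsum : (∑ r ∈ range (m + 1), Q.coeff r * ls.prod ^ (r + 1) / ((r : ℝ) + 1) ^ k)
      = ∑ r ∈ range (m + 1),
          ((-1 : ℝ) ^ r * z ^ (m - r) * (m.choose r : ℝ)) * ls.prod ^ (r + 1)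
            / ((r : ℝ) + 1) ^ k := by
    have e1 := iterInt_poly ls Q (m + 1) (lt_of_le_of_lt hQdeg (Nat.lt_succ_self m))
    have e2 := iterInt_monomials ls (m + 1)
      (fun i => (-1 : ℝ) ^ i * z ^ (m - i) * (m.choose i : ℝ))
    rw [hlen] at e1 e2
    rw [← e1, hbin, e2]
  -- now compare term by term after reflection
  have hLHS : (∑ i ∈ range (m + 1), (-1 : ℝ) ^ n *
        ((-1 : ℝ) ^ m * (m.factorial : ℝ) * (m.choose i : ℝ) * S n m *
          ls.prod ^ (m - i + 1) / (((m - i : ℕ) : ℝ) + 1) ^ k * (-z) ^ i))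
      = ∑ r ∈ range (m + 1), (-1 : ℝ) ^ n * (m.factorial : ℝ) * S n m *
          (((-1 : ℝ) ^ r * z ^ (m - r) * (m.choose r : ℝ)) * ls.prod ^ (r + 1)
            / ((r : ℝ) + 1) ^ k) := by
    rw [← Finset.sum_range_reflect
      (fun r => (-1 : ℝ) ^ n * (m.factorial : ℝ) * S n m *
        (((-1 : ℝ) ^ r * z ^ (m - r) * (m.choose r : ℝ)) * ls.prod ^ (r + 1)
          / ((r : ℝ) + 1) ^ k)) (m + 1)]
    refine Finset.sum_congr rfl fun i hi => ?_
    rw [Finset.mem_range, Nat.lt_succ_iff] at hi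
    have h1 : m + 1 - 1 - i = m - i := by omega
    have h2 : m - (m - i) = i := by omega
    have h3 : m.choose (m - i) = m.choose i := Nat.choose_symm hi
    rw [h1, h2, h3]
    have h4 : (-1 : ℝ) ^ m * (-1 : ℝ) ^ i = (-1 : ℝ) ^ (m - i) := by
      rw [← pow_add, show m + i = (m - i) + 2 * i by omega, pow_add, pow_mul]
      norm_num
    have h5 : (-z : ℝ) ^ i = (-1 : ℝ) ^ i * z ^ i := by
      rw [neg_pow]
    rw [h5, ← h4]
    ring
  rw [← hprod]
  refine hLHS.trans ?_
  rw [← Finset.mul_sum, ← Finset.mul_sum, hQsum]
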